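/- For i = 1, 2, 3 let μ^i ⊆ ℕ² be a finite downward-closed set (a Young diagram). Define C_μ ⊆ ℕ³ by: (x₁,x₂,x₃) ∈ C_μ if and only if (x₂,x₃) ∈ μ¹ or (x₁,x₃) ∈ μ² or (x₁,x₂) ∈ μ³. Say a downward-closed set π ⊆ ℕ³ has outgoing partitions (μ¹,μ²,μ³) if ∩_{a≥0} {(y,z) : (a,y,z) ∈ π} = μ¹, ∩_{a≥0} {(x,z) : (x,a,z) ∈ π} = μ², and ∩_{a≥0} {(x,y) : (x,y,a) ∈ π} = μ³. Then: (i) C_μ is downward closed and has outgoing partitions (μ¹,μ²,μ³); and (ii) every downward-closed set π ⊆ ℕ³ with outgoing partitions (μ¹,μ²,μ³) satisfies C_μ ⊆ π, and the difference π \ C_μ is finite. -/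

import Mathlib

/-- A subset of `ℕ²` is downward closed (a Young diagram, if finite) if it is closed under
componentwise decrease. -/
def DownwardClosed2 (S : Set (ℕ × ℕ)) : Prop :=
  ∀ p ∈ S, ∀ q : ℕ × ℕ, q.1 ≤ p.1 → q.2 ≤ p.2 → q ∈ S

/-- A subset of `ℕ³` is downward closed if it is closed under componentwise decrease. -/
def DownwardClosed3 (S : Set (ℕ × ℕ × ℕ)) : Prop :=
  ∀ p ∈ S, ∀ q : ℕ × ℕ × ℕ, q.1 ≤ p.1 → q.2.1 ≤ p.2.1 → q.2.2 ≤ p.2.2 → q ∈ S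

/-- The minimal configuration `C_μ ⊆ ℕ³` with outgoing partitions `(μ¹, μ², μ³)`:
`(x₁,x₂,x₃) ∈ C_μ` iff `(x₂,x₃) ∈ μ¹` or `(x₁,x₃) ∈ μ²` or `(x₁,x₂) ∈ μ³`. -/
def Cmu (μ1 μ2 μ3 : Set (ℕ × ℕ)) : Set (ℕ × ℕ × ℕ) :=
  {p | (p.2.1, p.2.2) ∈ μ1 ∨ (p.1, p.2.2) ∈ μ2 ∨ (p.1, p.2.1) ∈ μ3}

/-- `π ⊆ ℕ³` has outgoing partitions `(μ¹, μ², μ³)`: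
the limits of the slices in the three coordinate directions are `μ¹`, `μ²`, `μ³`. -/
def HasOutgoing (π : Set (ℕ × ℕ × ℕ)) (μ1 μ2 μ3 : Set (ℕ × ℕ)) : Prop :=
  (⋂ a : ℕ, {p : ℕ × ℕ | (a, p.1, p.2) ∈ π}) = μ1 ∧
  (⋂ a : ℕ, {p : ℕ × ℕ | (p.1, a, p.2) ∈ π}) = μ2 ∧
  (⋂ a : ℕ, {p : ℕ × ℕ | (p.1, p.2, a) ∈ π}) = μ3

/-- A finite subset of `ℕ²` has both coordinates bounded. -/
lemma exists_coord_bound (μ : Set (ℕ × ℕ)) (h : μ.Finite) :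
    ∃ N, ∀ p ∈ μ, p.1 < N ∧ p.2 < N := by
  obtain ⟨N1, hN1⟩ := (h.image Prod.fst).bddAbove
  obtain ⟨N2, hN2⟩ := (h.image Prod.snd).bddAbove
  refine ⟨max N1 N2 + 1, fun p hp => ⟨?_, ?_⟩⟩
  · exact lt_of_le_of_lt (hN1 ⟨p, hp, rfl⟩) (Nat.lt_succ_of_le (le_max_left _ _))
  · exact lt_of_le_of_lt (hN2 ⟨p, hp, rfl⟩) (Nat.lt_succ_of_le (le_max_right _ _))

/-- **Combinatorial content of Section 5** of Pandharipande–Thomas, "Curve counting via stable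
pairs in the derived category".  Given three Young diagrams `μ¹, μ², μ³ ⊆ ℕ²` (finite and
downward closed), the set `C_μ` is downward closed with outgoing partitions `(μ¹, μ², μ³)`, and
every downward-closed `π ⊆ ℕ³` with outgoing partitions `(μ¹, μ², μ³)` contains `C_μ` with finite
difference `π \ C_μ`. -/
theorem minimal_Tfixed_subscheme (μ1 μ2 μ3 : Set (ℕ × ℕ))
    (h1fin : μ1.Finite) (h2fin : μ2.Finite) (h3fin : μ3.Finite)
    (h1dc : DownwardClosed2 μ1) (h2dc : DownwardClosed2 μ2) (h3dc : DownwardClosed2 μ3) :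
    (DownwardClosed3 (Cmu μ1 μ2 μ3) ∧ HasOutgoing (Cmu μ1 μ2 μ3) μ1 μ2 μ3) ∧
    (∀ π : Set (ℕ × ℕ × ℕ), DownwardClosed3 π → HasOutgoing π μ1 μ2 μ3 →
      Cmu μ1 μ2 μ3 ⊆ π ∧ (π \ Cmu μ1 μ2 μ3).Finite) := by
  obtain ⟨M1, hm1⟩ := exists_coord_bound μ1 h1fin
  obtain ⟨M2, hm2⟩ := exists_coord_bound μ2 h2fin
  obtain ⟨M3, hm3⟩ := exists_coord_bound μ3 h3fin
  set N := M1 + M2 + M3 with hNdef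
  have hb1 : ∀ p ∈ μ1, p.1 < N ∧ p.2 < N := fun p hp =>
    ⟨by have := (hm1 p hp).1; omega, by have := (hm1 p hp).2; omega⟩
  have hb2 : ∀ p ∈ μ2, p.1 < N ∧ p.2 < N := fun p hp =>
    ⟨by have := (hm2 p hp).1; omega, by have := (hm2 p hp).2; omega⟩
  have hb3 : ∀ p ∈ μ3, p.1 < N ∧ p.2 < N := fun p hp =>
    ⟨by have := (hm3 p hp).1; omega, by have := (hm3 p hp).2; omega⟩
  constructor
  · constructor
    · -- `C_μ` is downward closed
      rintro p (h | h | h) q hq1 hq2 hq3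
      · exact Or.inl (h1dc _ h (q.2.1, q.2.2) hq2 hq3)
      · exact Or.inr (Or.inl (h2dc _ h (q.1, q.2.2) hq1 hq3))
      · exact Or.inr (Or.inr (h3dc _ h (q.1, q.2.1) hq1 hq2))
    · refine ⟨?_, ?_, ?_⟩
      · ext p
        simp only [Set.mem_iInter, Set.mem_setOf_eq, Cmu]
        constructor
        · intro h
          rcases h N with h' | h' | h'
          · exact h'
          · exact absurd (hb2 _ h').1 (lt_irrefl N)
          · exact absurd (hb3 _ h').1 (lt_irrefl N)
        · exact fun h a => Or.inl h
      · ext p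
        simp only [Set.mem_iInter, Set.mem_setOf_eq, Cmu]
        constructor
        · intro h
          rcases h N with h' | h' | h'
          · exact absurd (hb1 _ h').1 (lt_irrefl N)
          · exact h'
          · exact absurd (hb3 _ h').2 (lt_irrefl N)
        · exact fun h a => Or.inr (Or.inl h)
      · ext p
        simp only [Set.mem_iInter, Set.mem_setOf_eq, Cmu]
        constructor
        · intro h
          rcases h N with h' | h' | h'
          · exact absurd (hb1 _ h').2 (lt_irrefl N)
          · exact absurd (hb2 _ h').2 (lt_irrefl N)
          · exact h'
        · exact fun h a => Or.inr (Or.inr h)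
  · intro π hπdc hπout
    obtain ⟨o1, o2, o3⟩ := hπout
    have hsub : Cmu μ1 μ2 μ3 ⊆ π := by
      rintro p (h | h | h)
      · rw [← o1] at h
        exact Set.mem_iInter.mp h p.1
      · rw [← o2] at h
        exact Set.mem_iInter.mp h p.2.1
      · rw [← o3] at h
        exact Set.mem_iInter.mp h p.2.2
    refine ⟨hsub, ?_⟩
    by_contra hfin
    have hI : (π \ Cmu μ1 μ2 μ3).Infinite := hfin
    set f := hI.natEmbedding with hfdef
    have hpwoN : (Set.univ : Set ℕ).IsPWO :=
      (Set.isWF_univ_iff.mpr inferInstance).isPWO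
    obtain ⟨g, hg⟩ := (hpwoN.prod (hpwoN.prod hpwoN)).exists_monotone_subseq
      (f := fun n => ((f n : ℕ × ℕ × ℕ)))
      (fun n => by simp [Set.mem_prod])
    set q : ℕ → ℕ × ℕ × ℕ := fun n => ((f (g n) : ℕ × ℕ × ℕ)) with hqdef
    have hq : ∀ n, q n ∈ π := fun n => (f (g n)).2.1
    have hq' : ∀ n, q n ∉ Cmu μ1 μ2 μ3 := fun n => (f (g n)).2.2
    have mon1 : Monotone fun n => (q n).1 :=
      fun m n h => (Prod.le_def.mp (hg h)).1
    have mon2 : Monotone fun n => (q n).2.1 :=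
      fun m n h => (Prod.le_def.mp (Prod.le_def.mp (hg h)).2).1
    have mon3 : Monotone fun n => (q n).2.2 :=
      fun m n h => (Prod.le_def.mp (Prod.le_def.mp (hg h)).2).2
    have hqinj : Function.Injective q :=
      fun m n h => g.injective (f.injective (Subtype.ext h))
    have hDC : ∀ x y z n, x ≤ (q n).1 → y ≤ (q n).2.1 → z ≤ (q n).2.2 →
        (x, y, z) ∈ π :=
      fun x y z n hx hy hz => hπdc (q n) (hq n) (x, y, z) hx hy hz
    by_cases u1 : ∀ a, ∃ n, a ≤ (q n).1
    · refine hq' 0 (Or.inl ?_)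
      rw [← o1]
      refine Set.mem_iInter.mpr fun a => ?_
      obtain ⟨n, hn⟩ := u1 a
      exact hDC a _ _ n hn (mon2 (Nat.zero_le n)) (mon3 (Nat.zero_le n))
    by_cases u2 : ∀ a, ∃ n, a ≤ (q n).2.1
    · refine hq' 0 (Or.inr (Or.inl ?_))
      rw [← o2]
      refine Set.mem_iInter.mpr fun a => ?_
      obtain ⟨n, hn⟩ := u2 a
      exact hDC _ a _ n (mon1 (Nat.zero_le n)) hn (mon3 (Nat.zero_le n))
    by_cases u3 : ∀ a, ∃ n, a ≤ (q n).2.2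
    · refine hq' 0 (Or.inr (Or.inr ?_))
      rw [← o3]
      refine Set.mem_iInter.mpr fun a => ?_
      obtain ⟨n, hn⟩ := u3 a
      exact hDC _ _ a n (mon1 (Nat.zero_le n)) (mon2 (Nat.zero_le n)) hn
    push_neg at u1 u2 u3
    obtain ⟨a1, ha1⟩ := u1
    obtain ⟨a2, ha2⟩ := u2
    obtain ⟨a3, ha3⟩ := u3
    have hbox : Set.range q ⊆ Set.Iic a1 ×ˢ (Set.Iic a2 ×ˢ Set.Iic a3) := by
      rintro _ ⟨n, rfl⟩
      exact ⟨(ha1 n).le, (ha2 n).le, (ha3 n).le⟩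
    exact (Set.infinite_range_of_injective hqinj)
      (((Set.finite_Iic a1).prod ((Set.finite_Iic a2).prod (Set.finite_Iic a3))).subset hbox)
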